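/- For every N ≥ 2, the dynamical Lie algebra of the globally controlled Ising chain is a proper subalgebra of u(2^N): the real Lie subalgebra of the 2^N × 2^N complex matrices generated by {Complex.I • H0, Complex.I • H1} is strictly contained in the real Lie algebra of skew-adjoint matrices, i.e., there exists a matrix A with Aᴴ = −A that does not belong to the generated Lie subalgebra. Hence the Ising chain with a single global control field is not controllable. -/

import Mathlib

open Matrix

attribute [local instance] LieRing.ofAssociativeRing

/-- `Z n`: the Pauli-Z operator acting on site `n` of the chain. -/
noncomputable def Zop (N : ℕ) (n : Fin N) : Matrix (Fin N → Bool) (Fin N → Bool) ℂ :=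
  Matrix.diagonal fun s => if s n = false then 1 else -1

/-- `X n`: the Pauli-X (bit flip) operator acting on site `n`. -/
noncomputable def Xop (N : ℕ) (n : Fin N) : Matrix (Fin N → Bool) (Fin N → Bool) ℂ :=
  Matrix.of fun s t => if t = Function.update s n (!(s n)) then 1 else 0

/-- The nearest-neighbour Ising Hamiltonian `H0 = ∑_{n=0}^{N-2} Z_n Z_{n+1}`. -/
noncomputable def IsingH0 (N : ℕ) : Matrix (Fin N → Bool) (Fin N → Bool) ℂ :=
  ∑ n ∈ (Finset.range (N - 1)).attach,
    Zop N ⟨n.1, by have := Finset.mem_range.mp n.2; omega⟩ *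
    Zop N ⟨n.1 + 1, by have := Finset.mem_range.mp n.2; omega⟩

/-- The global transverse-field Hamiltonian `H1 = ∑_n X_n`. -/
noncomputable def IsingH1 (N : ℕ) : Matrix (Fin N → Bool) (Fin N → Bool) ℂ :=
  ∑ n : Fin N, Xop N n

/-- The dynamical Lie algebra `𝔏`: the real Lie subalgebra of the `2^N × 2^N` complex
matrices generated by `{i H0, i H1}`. -/
noncomputable def dynLieAlg (N : ℕ) :
    LieSubalgebra ℝ (Matrix (Fin N → Bool) (Fin N → Bool) ℂ) :=
  LieSubalgebra.lieSpan ℝ (Matrix (Fin N → Bool) (Fin N → Bool) ℂ)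
    {Complex.I • IsingH0 N, Complex.I • IsingH1 N}

section Aux

variable (N : ℕ)

/-- the global spin flip -/
def flipAll : (Fin N → Bool) → (Fin N → Bool) := fun s n => !(s n)

/-- parity operator: permutation matrix of the global spin flip -/
noncomputable def Mop : Matrix (Fin N → Bool) (Fin N → Bool) ℂ :=
  Matrix.of fun s t => if t = flipAll N s then 1 else 0

lemma flipAll_flipAll (s : Fin N → Bool) : flipAll N (flipAll N s) = s := by
  funext n; simp [flipAll]

lemma Mop_mul (A : Matrix (Fin N → Bool) (Fin N → Bool) ℂ) :
    Mop N * A = Matrix.of fun s t => A (flipAll N s) t := by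
  ext s t
  simp [Matrix.mul_apply, Mop, ite_mul]

lemma mul_Mop (A : Matrix (Fin N → Bool) (Fin N → Bool) ℂ) :
    A * Mop N = Matrix.of fun s t => A s (flipAll N t) := by
  ext s t
  have key : ∀ u : Fin N → Bool, (t = flipAll N u) = (u = flipAll N t) := by
    intro u
    apply propext
    constructor
    · rintro rfl; exact (flipAll_flipAll N u).symm
    · rintro rfl; exact (flipAll_flipAll N t).symm
  simp only [Matrix.mul_apply, Mop, Matrix.of_apply, key, mul_ite, mul_one, mul_zero]
  simp

lemma flip_update (s : Fin N → Bool) (n : Fin N) (b : Bool) :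
    flipAll N (Function.update s n b) = Function.update (flipAll N s) n (!b) := by
  funext m
  by_cases hm : m = n
  · subst hm; simp [flipAll]
  · simp [flipAll, Function.update_of_ne hm]

lemma upd_invol (s : Fin N → Bool) (n : Fin N) :
    Function.update (Function.update s n (!(s n))) n
      (!((Function.update s n (!(s n))) n)) = s := by
  simp

lemma flip_rel_symm (s t : Fin N → Bool) (n : Fin N) :
    (s = Function.update t n (!(t n))) ↔ (t = Function.update s n (!(s n))) := by
  constructor
  · rintro rfl; exact (upd_invol N t n).symm
  · rintro rfl; exact (upd_invol N s n).symm

lemma Zop_herm (n : Fin N) : (Zop N n)ᴴ = Zop N n := by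
  unfold Zop
  rw [Matrix.diagonal_conjTranspose]
  refine congrArg Matrix.diagonal ?_
  funext s
  by_cases h : s n = false <;> simp [h, Pi.star_apply]

lemma Xop_herm (n : Fin N) : (Xop N n)ᴴ = Xop N n := by
  ext s t
  rw [Matrix.conjTranspose_apply]
  show star (if s = Function.update t n (!(t n)) then (1:ℂ) else 0)
    = if t = Function.update s n (!(s n)) then 1 else 0
  by_cases h : s = Function.update t n (!(t n))
  · have h' := (flip_rel_symm N s t n).mp h
    rw [if_pos h, if_pos h', star_one]
  · have h' : ¬ (t = Function.update s n (!(s n))) :=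
      fun hc => h ((flip_rel_symm N s t n).mpr hc)
    rw [if_neg h, if_neg h', star_zero]

lemma Zop_mul_Zop (a b : Fin N) :
    Zop N a * Zop N b = Matrix.diagonal (fun s =>
      (if s a = false then 1 else -1) * (if s b = false then (1:ℂ) else -1)) := by
  unfold Zop
  rw [Matrix.diagonal_mul_diagonal]

lemma H0_herm : (IsingH0 N)ᴴ = IsingH0 N := by
  unfold IsingH0
  rw [Matrix.conjTranspose_sum]
  refine Finset.sum_congr rfl fun n _ => ?_
  rw [Matrix.conjTranspose_mul, Zop_herm, Zop_herm, Zop_mul_Zop, Zop_mul_Zop]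
  refine congrArg Matrix.diagonal ?_
  funext s
  ring

lemma H1_herm : (IsingH1 N)ᴴ = IsingH1 N := by
  unfold IsingH1
  rw [Matrix.conjTranspose_sum]
  exact Finset.sum_congr rfl fun n _ => Xop_herm N n

lemma diag_comm_Mop (d : (Fin N → Bool) → ℂ) (hd : ∀ s, d (flipAll N s) = d s) :
    Matrix.diagonal d * Mop N = Mop N * Matrix.diagonal d := by
  rw [Mop_mul, mul_Mop]
  ext s t
  by_cases h : flipAll N s = t
  · subst h
    simp [Matrix.diagonal_apply, flipAll_flipAll, hd]
  · have h' : s ≠ flipAll N t := by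
      intro hc; apply h; rw [hc, flipAll_flipAll]
    rw [Matrix.of_apply, Matrix.of_apply, Matrix.diagonal_apply_ne _ h',
      Matrix.diagonal_apply_ne _ h]

lemma Xop_comm_Mop (n : Fin N) : Xop N n * Mop N = Mop N * Xop N n := by
  rw [Mop_mul, mul_Mop]
  ext s t
  show (if flipAll N t = Function.update s n (!(s n)) then (1:ℂ) else 0)
    = if t = Function.update (flipAll N s) n (!((flipAll N s) n)) then 1 else 0
  have h1 : Function.update (flipAll N s) n (!((flipAll N s) n))
      = flipAll N (Function.update s n (!(s n))) := by
    rw [flip_update]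
    rfl
  rw [h1]
  have h2 : (flipAll N t = Function.update s n (!(s n)))
      ↔ (t = flipAll N (Function.update s n (!(s n)))) := by
    constructor
    · rintro h; rw [← h, flipAll_flipAll]
    · rintro rfl; rw [flipAll_flipAll]
  simp only [h2]

lemma H0_comm_Mop : IsingH0 N * Mop N = Mop N * IsingH0 N := by
  unfold IsingH0
  rw [Finset.sum_mul, Finset.mul_sum]
  refine Finset.sum_congr rfl fun n _ => ?_
  rw [Zop_mul_Zop, diag_comm_Mop]
  intro s
  have key : ∀ m : Fin N, (if (flipAll N s) m = false then (1:ℂ) else -1)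
      = -(if s m = false then 1 else -1) := by
    intro m; cases h : s m <;> simp [flipAll, h]
  rw [key, key]; ring

lemma H1_comm_Mop : IsingH1 N * Mop N = Mop N * IsingH1 N := by
  unfold IsingH1
  rw [Finset.sum_mul, Finset.mul_sum]
  exact Finset.sum_congr rfl fun n _ => Xop_comm_Mop N n

/-- The Lie subalgebra of skew-adjoint matrices commuting with the parity operator. -/
noncomputable def goodSub : LieSubalgebra ℝ (Matrix (Fin N → Bool) (Fin N → Bool) ℂ) where
  carrier := {A | Aᴴ = -A ∧ A * Mop N = Mop N * A}
  add_mem' := by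
    rintro A B ⟨hA1, hA2⟩ ⟨hB1, hB2⟩
    refine ⟨?_, ?_⟩
    · rw [Matrix.conjTranspose_add, hA1, hB1, neg_add]
    · rw [add_mul, mul_add, hA2, hB2]
  zero_mem' := by
    refine ⟨?_, ?_⟩ <;> simp
  smul_mem' := by
    rintro r A ⟨h1, h2⟩
    refine ⟨?_, ?_⟩
    · rw [Matrix.conjTranspose_smul, h1, star_trivial, smul_neg]
    · rw [smul_mul_assoc, mul_smul_comm, h2]
  lie_mem' := by
    rintro A B ⟨hA1, hA2⟩ ⟨hB1, hB2⟩
    refine ⟨?_, ?_⟩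
    · rw [Ring.lie_def, Matrix.conjTranspose_sub, Matrix.conjTranspose_mul,
        Matrix.conjTranspose_mul, hA1, hB1]
      simp only [Matrix.neg_mul, Matrix.mul_neg, neg_neg, neg_sub]
    · have e1 : A * B * Mop N = Mop N * (A * B) := by
        rw [mul_assoc, hB2, ← mul_assoc, hA2, mul_assoc]
      have e2 : B * A * Mop N = Mop N * (B * A) := by
        rw [mul_assoc, hA2, ← mul_assoc, hB2, mul_assoc]
      rw [Ring.lie_def, sub_mul, mul_sub, e1, e2]

lemma mem_goodSub_iff (A : Matrix (Fin N → Bool) (Fin N → Bool) ℂ) :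
    A ∈ goodSub N ↔ (Aᴴ = -A ∧ A * Mop N = Mop N * A) := Iff.rfl

lemma gen0_mem : Complex.I • IsingH0 N ∈ goodSub N := by
  rw [mem_goodSub_iff]
  refine ⟨?_, ?_⟩
  · rw [Matrix.conjTranspose_smul, H0_herm, Complex.star_def, Complex.conj_I, neg_smul]
  · rw [smul_mul_assoc, mul_smul_comm, H0_comm_Mop]

lemma gen1_mem : Complex.I • IsingH1 N ∈ goodSub N := by
  rw [mem_goodSub_iff]
  refine ⟨?_, ?_⟩
  · rw [Matrix.conjTranspose_smul, H1_herm, Complex.star_def, Complex.conj_I, neg_smul]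
  · rw [smul_mul_assoc, mul_smul_comm, H1_comm_Mop]

lemma dyn_le_good : dynLieAlg N ≤ goodSub N := by
  rw [dynLieAlg, LieSubalgebra.lieSpan_le]
  rintro x (rfl | rfl)
  · exact gen0_mem N
  · exact gen1_mem N

end Aux

/-- For every `N ≥ 2`, the dynamical Lie algebra of the globally controlled Ising chain
is a proper subalgebra of `u(2^N)`: every element is skew-adjoint, but there exists a
skew-adjoint matrix not in it.  Hence the Ising chain with a single global control field
is not controllable. -/
theorem dynLieAlg_proper_in_unitary_algebra (N : ℕ) (hN : 2 ≤ N) :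
    (∀ A ∈ dynLieAlg N, Aᴴ = -A) ∧
    ∃ A : Matrix (Fin N → Bool) (Fin N → Bool) ℂ, Aᴴ = -A ∧ A ∉ dynLieAlg N := by
  have hle := dyn_le_good N
  constructor
  · intro A hA
    exact ((mem_goodSub_iff N A).mp (hle hA)).1
  · set s0 : Fin N → Bool := fun _ => false with hs0
    set D : Matrix (Fin N → Bool) (Fin N → Bool) ℂ :=
      Matrix.diagonal (fun s => if s = s0 then 1 else 0) with hD
    refine ⟨Complex.I • D, ?_, ?_⟩
    · rw [Matrix.conjTranspose_smul, Complex.star_def, Complex.conj_I, neg_smul, neg_inj]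
      rw [hD, Matrix.diagonal_conjTranspose]
      have : (star fun s => if s = s0 then (1:ℂ) else 0) = fun s => if s = s0 then 1 else 0 := by
        funext s
        by_cases h : s = s0 <;> simp [h, Pi.star_apply]
      rw [this]
    · intro hmem
      have hcomm := ((mem_goodSub_iff N _).mp (hle hmem)).2
      have hflip : flipAll N s0 ≠ s0 := by
        intro hc
        have := congrFun hc ⟨0, by omega⟩
        simp [flipAll, hs0] at this
      rw [smul_mul_assoc, mul_smul_comm, Mop_mul, mul_Mop] at hcomm
      have h2 := Matrix.ext_iff.2 hcomm s0 (flipAll N s0)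
      simp only [Matrix.smul_apply, Matrix.of_apply] at h2
      rw [flipAll_flipAll] at h2
      simp [hD, Matrix.diagonal_apply, hflip] at h2
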